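/- Let g be a finite-dimensional real Lie algebra with an involutive Lie algebra automorphism σ whose (+1)-eigenspace h and (−1)-eigenspace m satisfy g = h ⊕ m and h = ⁅m,m⁆, and let B_m be a nondegenerate symmetric bilinear form on m invariant under ad(h). Let B be the unique ad(g)-invariant symmetric bilinear extension of B_m to g with B(h,m) = 0. Then the following are equivalent: (a) B is nondegenerate on g; (b) the representation h → End(m), h ↦ ad(h)|_m, is injective; (c) the only ideal of g contained in h is the zero ideal. -/

import Mathlib

/-- For the unique `ad(g)`-invariant symmetric extension `B` (with
`B(h,m) = 0`) of a nondegenerate invariant form on `m`, the following are equivalent: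
(a) `B` is nondegenerate on `g`; (b) `h → End(m)`, `h ↦ ad(h)|_m`, is injective;
(c) the only ideal of `g` contained in `h` is zero. -/
theorem nondegenerate_iff_faithful_iff_no_ideal
    (L : Type*) [LieRing L] [LieAlgebra ℝ L] [FiniteDimensional ℝ L]
    (σ : L →ₗ⁅ℝ⁆ L) (hσ : ∀ x, σ (σ x) = x)
    (H M : Submodule ℝ L)
    (hH : ∀ x, x ∈ H ↔ σ x = x)
    (hM : ∀ x, x ∈ M ↔ σ x = -x)
    (hcompl : IsCompl H M)
    (hHspan : H = Submodule.span ℝ {z : L | ∃ x ∈ M, ∃ y ∈ M, ⁅x, y⁆ = z})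
    (B : LinearMap.BilinForm ℝ L)
    (hBsymm : ∀ x y : L, B x y = B y x)
    (hBad : ∀ x y z : L, B ⁅x, y⁆ z = B x ⁅y, z⁆)
    (hBHM : ∀ h ∈ H, ∀ m ∈ M, B h m = 0)
    -- the restriction of `B` to `m` (i.e. `B_m`) is nondegenerate
    (hBmnd : ∀ u ∈ M, (∀ v ∈ M, B u v = 0) → u = 0) :
    (B.Nondegenerate ↔ ∀ h ∈ H, (∀ m ∈ M, ⁅h, m⁆ = 0) → h = 0) ∧
    (B.Nondegenerate ↔ ∀ I : LieIdeal ℝ L, I.toSubmodule ≤ H → I = ⊥) := by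

  have hHM : ∀ x ∈ H, ∀ m ∈ M, ⁅x, m⁆ ∈ M := by
    intro x hx m hm
    rw [hM, LieHom.map_lie, (hH x).1 hx, (hM m).1 hm, lie_neg]
  have hHH : ∀ x ∈ H, ∀ y ∈ H, ⁅x, y⁆ ∈ H := by
    intro x hx y hy
    rw [hH, LieHom.map_lie, (hH x).1 hx, (hH y).1 hy]
  -- decomposition
  have hdec : ∀ z : L, ∃ a ∈ H, ∃ b ∈ M, a + b = z := by
    intro z
    have hz : z ∈ H ⊔ M := by rw [hcompl.sup_eq_top]; trivial
    obtain ⟨a, ha, b, hb, h⟩ := Submodule.mem_sup.mp hz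
    exact ⟨a, ha, b, hb, h⟩
  -- key: h ∈ H killing M is B-orthogonal to everything
  have key : ∀ h ∈ H, (∀ m ∈ M, ⁅h, m⁆ = 0) → ∀ z, B h z = 0 := by
    intro h hh hker z
    obtain ⟨a, ha, b, hb, rfl⟩ := hdec z
    have hBa : B h a = 0 := by
      rw [hHspan] at ha
      induction ha using Submodule.span_induction with
      | mem w hw =>
        obtain ⟨u, hu, v, hv, rfl⟩ := hw
        rw [hBsymm, hBad]
        have : ⁅v, h⁆ = 0 := by
          rw [← lie_skew, hker v hv, neg_zero]
        rw [this, map_zero]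
      | zero => simp
      | add w₁ w₂ _ _ h₁ h₂ => rw [map_add, h₁, h₂, add_zero]
      | smul c w _ hw => rw [map_smul, hw, smul_zero]
    rw [map_add, hBa, hBHM h hh b hb, add_zero]
  -- (a) ↔ (b)
  have iff1 : B.Nondegenerate ↔ ∀ h ∈ H, (∀ m ∈ M, ⁅h, m⁆ = 0) → h = 0 := by
    constructor
    · intro hnd h hh hker
      exact hnd.1 h (key h hh hker)
    · intro hP
      refine (LinearMap.IsRefl.nondegenerate_iff_separatingLeft (fun x y h => by rwa [hBsymm] at h)).mpr ?_
      intro x hx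
      obtain ⟨a, ha, b, hb, rfl⟩ := hdec x
      have hb0 : b = 0 := by
        apply hBmnd b hb
        intro v hv
        have := hx v
        rw [map_add, LinearMap.add_apply, hBHM a ha v hv, zero_add] at this
        exact this
      subst hb0
      rw [add_zero] at hx ⊢
      apply hP a ha
      intro m hm
      apply hBmnd _ (hHM a ha m hm)
      intro v hv
      rw [hBad]
      exact hx ⁅m, v⁆
  -- (b) → (c)
  have hPQ : (∀ h ∈ H, (∀ m ∈ M, ⁅h, m⁆ = 0) → h = 0) →
      ∀ I : LieIdeal ℝ L, I.toSubmodule ≤ H → I = ⊥ := by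
    intro hP I hIH
    rw [eq_bot_iff]
    intro x hx
    have hxH : x ∈ H := hIH hx
    have hx0 : x = 0 := by
      apply hP x hxH
      intro m hm
      have h1 : ⁅x, m⁆ ∈ M := hHM x hxH m hm
      have h2 : ⁅x, m⁆ ∈ H := by
        have : ⁅m, x⁆ ∈ I := I.lie_mem hx
        have : ⁅m, x⁆ ∈ H := hIH this
        rw [← lie_skew]
        exact H.neg_mem this
      exact (Submodule.disjoint_def.mp hcompl.disjoint _ h2 h1)
    rw [hx0]
    exact (⊥ : LieIdeal ℝ L).zero_mem
  -- (c) → (b)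
  have hQP : (∀ I : LieIdeal ℝ L, I.toSubmodule ≤ H → I = ⊥) →
      ∀ h ∈ H, (∀ m ∈ M, ⁅h, m⁆ = 0) → h = 0 := by
    intro hQ h hh hker
    -- the ideal of elements of H killing M
    set Ksub : Submodule ℝ L :=
      { carrier := {x | x ∈ H ∧ ∀ m ∈ M, ⁅x, m⁆ = 0}
        add_mem' := by
          rintro a b ⟨haH, haK⟩ ⟨hbH, hbK⟩
          exact ⟨H.add_mem haH hbH, fun m hm => by
            rw [add_lie, haK m hm, hbK m hm, add_zero]⟩
        zero_mem' := ⟨H.zero_mem, fun m _ => zero_lie m⟩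
        smul_mem' := by
          rintro c a ⟨haH, haK⟩
          exact ⟨H.smul_mem c haH, fun m hm => by
            rw [smul_lie, haK m hm, smul_zero]⟩ } with hKsub
    have hlie : ∀ (x k : L), k ∈ Ksub → ⁅x, k⁆ ∈ Ksub := by
      intro x k hk
      obtain ⟨hkH, hkK⟩ := hk
      obtain ⟨a, ha, b, hb, rfl⟩ := hdec x
      have hbk : ⁅b, k⁆ = 0 := by
        rw [← lie_skew, hkK b hb, neg_zero]
      rw [add_lie, hbk, add_zero]
      refine ⟨hHH a ha k hkH, ?_⟩
      intro m hm
      rw [lie_lie, hkK m hm, lie_zero, zero_sub, neg_eq_zero]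
      exact hkK _ (hHM a ha m hm)
    set K : LieIdeal ℝ L :=
      { Ksub with lie_mem := fun {x k} hk => hlie x k hk } with hK
    have hKH : K.toSubmodule ≤ H := fun x hx => hx.1
    have hK0 : K = ⊥ := hQ K hKH
    have hmem : h ∈ K := ⟨hh, hker⟩
    rw [hK0] at hmem
    exact hmem
  exact ⟨iff1, iff1.trans ⟨fun hP => hPQ hP, fun hQ => hQP hQ⟩⟩
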